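/- Let f̂ : ℝ^d → ℝ be differentiable with L₁-Lipschitz gradient, η ∈ (0, 1/L₁), γ > 0 with ηγ ≤ 1/4, and ζ = 1 - √(ηγ). Consider Nesterov's accelerated gradient iterates y_{τ+1} = u_τ - η∇f̂(u_τ), u_{τ+1} = y_{τ+1} + ζ(y_{τ+1} - y_τ). Suppose that at step τ the condition f̂(y_τ) ≥ f̂(u_τ) + ∇f̂(u_τ)ᵀ(y_τ - u_τ) - (γ/2)‖y_τ - u_τ‖² holds. Then f̂(y_{τ+1}) + (1/(2η))‖y_{τ+1} - y_τ‖² ≤ f̂(y_τ) + (1/(2η))‖y_τ - y_{τ-1}‖² - (√(ηγ)/(2η))‖y_τ - y_{τ-1}‖². -/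

import Mathlib

open scoped RealInnerProductSpace

lemma descent_lemma {d : ℕ}
    (f : EuclideanSpace ℝ (Fin d) → ℝ)
    (g : EuclideanSpace ℝ (Fin d) → EuclideanSpace ℝ (Fin d))
    (L : ℝ) (hL : 0 ≤ L)
    (hgrad : ∀ x, HasGradientAt f (g x) x)
    (hlip : ∀ x y, ‖g x - g y‖ ≤ L * ‖x - y‖)
    (x y : EuclideanSpace ℝ (Fin d)) :
    f y ≤ f x + ⟪g x, y - x⟫ + L / 2 * ‖y - x‖ ^ 2 := by
  set v := y - x with hv
  have hcg : Continuous g := by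
    have : LipschitzWith ⟨L, hL⟩ g :=
      LipschitzWith.of_dist_le_mul (fun a b => by
        rw [dist_eq_norm, dist_eq_norm]; exact hlip a b)
    exact this.continuous
  have hderiv : ∀ t : ℝ, HasDerivAt (fun t : ℝ => f (x + t • v))
      ⟪g (x + t • v), v⟫ t := by
    intro t
    have hcurve : HasDerivAt (fun t : ℝ => x + t • v) v t := by
      simpa using ((hasDerivAt_id t).smul_const v).const_add x
    have := ((hgrad (x + t • v)).hasFDerivAt.comp_hasDerivAt t hcurve)
    simpa [InnerProductSpace.toDual_apply_apply, Function.comp_def] using this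
  have hφ' : Continuous (fun t : ℝ => (⟪g (x + t • v), v⟫ : ℝ)) := by
    exact (Continuous.inner (hcg.comp (by continuity)) continuous_const)
  have hint : ∫ t in (0:ℝ)..1, (⟪g (x + t • v), v⟫ : ℝ) = f y - f x := by
    rw [intervalIntegral.integral_eq_sub_of_hasDerivAt
      (fun t _ => hderiv t) (hφ'.intervalIntegrable 0 1)]
    simp [hv]
  have hbound : ∀ t ∈ Set.Icc (0:ℝ) 1,
      (⟪g (x + t • v), v⟫ : ℝ) ≤ ⟪g x, v⟫ + L * t * ‖v‖ ^ 2 := by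
    intro t ht
    have h1 : (⟪g (x + t • v), v⟫ : ℝ) - ⟪g x, v⟫ = ⟪g (x + t • v) - g x, v⟫ := by
      rw [inner_sub_left]
    have h2 : (⟪g (x + t • v) - g x, v⟫ : ℝ) ≤ ‖g (x + t • v) - g x‖ * ‖v‖ :=
      real_inner_le_norm _ _
    have h3 : ‖g (x + t • v) - g x‖ ≤ L * (t * ‖v‖) := by
      have := hlip (x + t • v) x
      simpa [norm_smul, abs_of_nonneg ht.1, mul_assoc] using this
    nlinarith [norm_nonneg v, mul_nonneg (mul_nonneg hL ht.1) (norm_nonneg v)]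
  have hmono : ∫ t in (0:ℝ)..1, (⟪g (x + t • v), v⟫ : ℝ)
      ≤ ∫ t in (0:ℝ)..1, (⟪g x, v⟫ + L * t * ‖v‖ ^ 2) := by
    apply intervalIntegral.integral_mono_on (by norm_num)
      (hφ'.intervalIntegrable 0 1)
      ((by continuity : Continuous fun t : ℝ => (⟪g x, v⟫ + L * t * ‖v‖ ^ 2)).intervalIntegrable 0 1)
    exact hbound
  have hrhs : ∫ t in (0:ℝ)..1, (⟪g x, v⟫ + L * t * ‖v‖ ^ 2)
      = ⟪g x, v⟫ + L / 2 * ‖v‖ ^ 2 := by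
    rw [intervalIntegral.integral_add intervalIntegrable_const
      ((by fun_prop : Continuous fun t : ℝ => L * t * ‖v‖ ^ 2).intervalIntegrable 0 1)]
    have h1 : ∫ t in (0:ℝ)..1, L * t * ‖v‖ ^ 2 = L / 2 * ‖v‖ ^ 2 := by
      have he : (fun t : ℝ => L * t * ‖v‖ ^ 2) = fun t : ℝ => (L * ‖v‖ ^ 2) * t := by
        funext t; ring
      rw [he, intervalIntegral.integral_const_mul, integral_id]
      ring
    rw [h1]; simp
  rw [hint] at hmono
  rw [hrhs] at hmono
  linarith


set_option maxHeartbeats 1000000 in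
/-- One-step Lyapunov decrease for Nesterov's accelerated gradient
iterates when the approximate-convexity condition holds at step `τ`. -/
theorem nag_lyapunov_decrease {d : ℕ}
    (fhat : EuclideanSpace ℝ (Fin d) → ℝ)
    (g : EuclideanSpace ℝ (Fin d) → EuclideanSpace ℝ (Fin d))
    (L₁ η γ ζ : ℝ) (hL₁ : 0 < L₁)
    (hgrad : ∀ x, HasGradientAt fhat (g x) x)
    (hlip : ∀ x y, ‖g x - g y‖ ≤ L₁ * ‖x - y‖)
    (hη : 0 < η) (hη' : η < 1 / L₁)
    (hγ : 0 < γ) (hηγ : η * γ ≤ 1 / 4)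
    (hζ : ζ = 1 - Real.sqrt (η * γ))
    (yprev y u ynext : EuclideanSpace ℝ (Fin d))
    (hmom : u - y = ζ • (y - yprev))
    (hynext : ynext = u - η • g u)
    (hcond : fhat y ≥ fhat u + ⟪g u, y - u⟫ - γ / 2 * ‖y - u‖ ^ 2) :
    fhat ynext + 1 / (2 * η) * ‖ynext - y‖ ^ 2
      ≤ fhat y + 1 / (2 * η) * ‖y - yprev‖ ^ 2
        - Real.sqrt (η * γ) / (2 * η) * ‖y - yprev‖ ^ 2 := by
  set s := Real.sqrt (η * γ) with hs
  have hηγpos : 0 < η * γ := mul_pos hη hγ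
  have hspos : 0 < s := Real.sqrt_pos.mpr hηγpos
  have hs2 : s ^ 2 = η * γ := Real.sq_sqrt hηγpos.le
  have hshalf : s ≤ 1 / 2 := by nlinarith [hs2, hspos]
  have hηL : η * L₁ < 1 := by
    have := (lt_div_iff₀ hL₁).mp hη'
    linarith
  have hGnn : (0:ℝ) ≤ ‖g u‖ ^ 2 := sq_nonneg _
  have hBnn : (0:ℝ) ≤ ‖y - yprev‖ ^ 2 := sq_nonneg _
  -- descent step
  have hynu : ynext - u = -(η • g u) := by rw [hynext]; abel
  have h1 : fhat ynext ≤ fhat u - η * ‖g u‖ ^ 2 + L₁ / 2 * (η ^ 2 * ‖g u‖ ^ 2) := by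
    have hdesc := descent_lemma fhat g L₁ hL₁.le hgrad hlip u ynext
    have e1 : ⟪g u, ynext - u⟫ = -(η * ‖g u‖ ^ 2) := by
      rw [hynu, inner_neg_right, real_inner_smul_right, real_inner_self_eq_norm_sq]
    have e2 : ‖ynext - u‖ ^ 2 = η ^ 2 * ‖g u‖ ^ 2 := by
      rw [hynu, norm_neg, norm_smul, Real.norm_eq_abs, mul_pow, sq_abs]
    rw [e1, e2] at hdesc
    linarith
  have h2 : fhat u ≤ fhat y + ⟪u - y, g u⟫ + γ / 2 * ‖u - y‖ ^ 2 := by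
    have e3 : ⟪g u, y - u⟫ = -⟪u - y, g u⟫ := by
      rw [show y - u = -(u - y) by abel, inner_neg_right, real_inner_comm]
    have e4 : ‖y - u‖ = ‖u - y‖ := norm_sub_rev y u
    rw [e3, e4] at hcond
    linarith
  have h3 : ‖ynext - y‖ ^ 2
      = ‖u - y‖ ^ 2 - 2 * (η * ⟪u - y, g u⟫) + η ^ 2 * ‖g u‖ ^ 2 := by
    have e5 : ynext - y = (u - y) - η • g u := by rw [hynext]; abel
    rw [e5, norm_sub_sq_real, real_inner_smul_right, norm_smul, Real.norm_eq_abs,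
      mul_pow, sq_abs]
  have h4 : ‖u - y‖ ^ 2 = ζ ^ 2 * ‖y - yprev‖ ^ 2 := by
    rw [hmom, norm_smul, Real.norm_eq_abs, mul_pow, sq_abs]
  have hkey : (1 + η * γ) * ζ ^ 2 ≤ 1 - s := by
    have h1s : (0:ℝ) ≤ 1 - s := by linarith
    have h1ss : (0:ℝ) ≤ 1 - s + s ^ 2 := by nlinarith [sq_nonneg s]
    have hprod : 0 ≤ s * ((1 - s) * (1 - s + s ^ 2)) :=
      mul_nonneg hspos.le (mul_nonneg h1s h1ss)
    rw [hζ, ← hs2]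
    nlinarith [hprod]
  have h2η : (0:ℝ) < 2 * η := by linarith
  have h12 : fhat ynext ≤ fhat y + ⟪u - y, g u⟫ + γ / 2 * ‖u - y‖ ^ 2
      + (L₁ * η ^ 2 / 2 - η) * ‖g u‖ ^ 2 := by linarith [h1, h2]
  have h12' : 2 * η * fhat ynext ≤ 2 * η * (fhat y + ⟪u - y, g u⟫
      + γ / 2 * ‖u - y‖ ^ 2 + (L₁ * η ^ 2 / 2 - η) * ‖g u‖ ^ 2) :=
    mul_le_mul_of_nonneg_left h12 h2η.le
  have h4' : (1 + η * γ) * ‖u - y‖ ^ 2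
      = (1 + η * γ) * ζ ^ 2 * ‖y - yprev‖ ^ 2 := by rw [h4]; ring
  have hkeyB : (1 + η * γ) * ζ ^ 2 * ‖y - yprev‖ ^ 2
      ≤ (1 - s) * ‖y - yprev‖ ^ 2 := mul_le_mul_of_nonneg_right hkey hBnn
  have hGle : (L₁ * η ^ 3 - η ^ 2) * ‖g u‖ ^ 2 ≤ 0 := by
    have h5 : L₁ * η ^ 3 - η ^ 2 ≤ 0 := by
      nlinarith [mul_nonneg (sq_nonneg η) (by linarith : (0:ℝ) ≤ 1 - η * L₁)]
    exact mul_nonpos_of_nonpos_of_nonneg h5 hGnn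
  have Hmain : 2 * η * fhat ynext + ‖ynext - y‖ ^ 2
      ≤ 2 * η * fhat y + (1 - s) * ‖y - yprev‖ ^ 2 := by
    linarith [h12', h3, h4', hkeyB, hGle]
  calc fhat ynext + 1 / (2 * η) * ‖ynext - y‖ ^ 2
      = (2 * η * fhat ynext + ‖ynext - y‖ ^ 2) / (2 * η) := by field_simp
    _ ≤ (2 * η * fhat y + (1 - s) * ‖y - yprev‖ ^ 2) / (2 * η) := by gcongr
    _ = fhat y + 1 / (2 * η) * ‖y - yprev‖ ^ 2 - s / (2 * η) * ‖y - yprev‖ ^ 2 := by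
        field_simp; ring
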